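/- Let (Ω, ℱ, P) be a probability space, let G and V be real random variables such that G has Gaussian law with mean m ∈ ℝ and variance s² (s > 0), G and V are independent, and let D ∈ ℝ be such that P(V < D) > 0. Then for every c > 0, with w := −log(c) − m, the conditional expectation of (1 − c·e^G)₊ given the event {V < D} equals Φ(w/s) − c·e^{m + s²/2}·Φ(w/s − s); that is, E[(1 − c·e^G)₊ · 1_{{V < D}}] / P(V < D) = Φ(w/s) − c·e^{m + s²/2}·Φ(w/s − s). -/

import Mathlib

open MeasureTheory ProbabilityTheory
open scoped ENNReal NNReal

/-- The standard normal density `φ(x) = (2π)^{-1/2} e^{-x²/2}`. -/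
noncomputable def stdGaussianPDF (x : ℝ) : ℝ :=
  (Real.sqrt (2 * Real.pi))⁻¹ * Real.exp (-x ^ 2 / 2)

/-- The standard normal cumulative distribution function `Φ`. -/
noncomputable def stdGaussianCDF (x : ℝ) : ℝ :=
  ∫ z in Set.Iio x, stdGaussianPDF z

lemma pdf01_eq' : gaussianPDFReal 0 1 = stdGaussianPDF := by
  funext x
  simp [gaussianPDFReal, stdGaussianPDF, neg_div]

lemma cdf_eq' (t : ℝ) : ((gaussianReal 0 1) (Set.Iio t)).toReal = stdGaussianCDF t := by
  rw [gaussianReal_apply_eq_integral 0 one_ne_zero, ENNReal.toReal_ofReal]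
  · rw [pdf01_eq']; rfl
  · exact setIntegral_nonneg measurableSet_Iio fun x _ => gaussianPDFReal_nonneg _ _ _

lemma transl' (t s : ℝ) : ∫ z in Set.Iio t, stdGaussianPDF (z - s) = stdGaussianCDF (t - s) := by
  have hemb : MeasurableEmbedding (fun z : ℝ => z - s) :=
    (MeasurableEquiv.subRight s).measurableEmbedding
  have h := (measurePreserving_sub_right (volume : Measure ℝ) s).setIntegral_preimage_emb
    hemb stdGaussianPDF (Set.Iio (t - s))
  have hpre : (fun z : ℝ => z - s) ⁻¹' Set.Iio (t - s) = Set.Iio t := by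
    ext z; simp [sub_lt_sub_iff_right]
  rw [stdGaussianCDF, ← h, hpre]

-- main gaussian computation
lemma gauss_integral (m s c : ℝ) (hs : 0 < s) (hc : 0 < c) :
    ∫ x, max (1 - c * Real.exp x) 0 ∂(gaussianReal m ⟨s ^ 2, sq_nonneg s⟩)
      = stdGaussianCDF ((-Real.log c - m) / s)
        - c * Real.exp (m + s ^ 2 / 2) * stdGaussianCDF ((-Real.log c - m) / s - s) := by
  set t : ℝ := (-Real.log c - m) / s with ht
  have hsne : s ≠ 0 := hs.ne'
  -- gaussianReal m s² as image of N(0,1)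
  have hmap : (gaussianReal 0 1).map (fun z => s * z + m) = gaussianReal m ⟨s ^ 2, sq_nonneg s⟩ := by
    have h1 : (gaussianReal 0 1).map (fun z => s * z + m)
        = ((gaussianReal 0 1).map (s * ·)).map (· + m) := by
      rw [Measure.map_map (measurable_id'.add_const m) (measurable_const_mul s)]
      rfl
    rw [h1, gaussianReal_map_const_mul, gaussianReal_map_add_const]
    norm_num
    rfl
  rw [← hmap]
  have hFcont : Continuous (fun x : ℝ => max (1 - c * Real.exp x) 0) := by
    fun_prop
  rw [integral_map (by fun_prop) hFcont.aestronglyMeasurable]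
  -- indicator form
  have hind : ∀ z : ℝ, max (1 - c * Real.exp (s * z + m)) 0
      = (Set.Iio t).indicator (fun z => 1 - c * Real.exp (s * z + m)) z := by
    intro z
    rcases lt_or_ge z t with h | h
    · rw [Set.indicator_of_mem (Set.mem_Iio.mpr h)]
      have hst : s * t = -Real.log c - m := by
        rw [ht]; field_simp
      have : s * z + m < -Real.log c := by
        nlinarith [(mul_lt_mul_iff_right₀ hs).mpr h]
      have hlt : c * Real.exp (s * z + m) < 1 := by
        have := Real.exp_lt_exp.mpr this
        rw [Real.exp_neg, Real.exp_log hc] at this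
        calc c * Real.exp (s * z + m) < c * c⁻¹ := by
              exact (mul_lt_mul_iff_right₀ hc).mpr this
          _ = 1 := mul_inv_cancel₀ hc.ne'
      exact max_eq_left (by linarith)
    · rw [Set.indicator_of_notMem (by simpa using h)]
      have hst : s * t = -Real.log c - m := by
        rw [ht]; field_simp
      have : -Real.log c ≤ s * z + m := by nlinarith [(mul_le_mul_iff_right₀ hs).mpr h]
      have hge : 1 ≤ c * Real.exp (s * z + m) := by
        have := Real.exp_le_exp.mpr this
        rw [Real.exp_neg, Real.exp_log hc] at this
        calc (1:ℝ) = c * c⁻¹ := (mul_inv_cancel₀ hc.ne').symm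
          _ ≤ c * Real.exp (s * z + m) := (mul_le_mul_iff_right₀ hc).mpr this
      exact max_eq_right (by linarith)
  simp_rw [hind]
  rw [integral_indicator measurableSet_Iio]
  -- split
  have hint_exp : IntegrableOn (fun z => c * Real.exp (s * z + m)) (Set.Iio t) (gaussianReal 0 1) := by
    refine Integrable.mono' (integrable_const (c * Real.exp (s * t + m))) ?_ ?_
    · exact (by fun_prop : Continuous fun z : ℝ => c * Real.exp (s * z + m)).aestronglyMeasurable
    · refine (ae_restrict_iff' measurableSet_Iio).mpr (ae_of_all _ fun z hz => ?_)
      have : Real.exp (s * z + m) ≤ Real.exp (s * t + m) :=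
        Real.exp_le_exp.mpr (by nlinarith [Set.mem_Iio.mp hz])
      rw [Real.norm_eq_abs, abs_of_nonneg (by positivity)]
      exact mul_le_mul_of_nonneg_left this hc.le
  rw [integral_sub (show IntegrableOn (fun _ => (1:ℝ)) (Set.Iio t) (gaussianReal 0 1) from integrableOn_const (measure_ne_top _ _)) hint_exp]
  rw [setIntegral_const, smul_eq_mul, mul_one, measureReal_def, cdf_eq']
  congr 1
  -- compute ∫ z in Iio t, c * exp (s z + m) dN01
  rw [integral_const_mul]
  have hone : (1 : ℝ≥0) ≠ 0 := one_ne_zero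
  have hν : gaussianReal 0 1 = volume.withDensity (fun x => ((gaussianPDFReal 0 1 x).toNNReal : ℝ≥0∞)) := by
    rw [gaussianReal_of_var_ne_zero 0 hone]
    rfl
  rw [hν, setIntegral_withDensity_eq_setIntegral_smul
    (by exact (measurable_gaussianPDFReal 0 1).real_toNNReal) _ measurableSet_Iio]
  have hpt : ∀ z : ℝ, (Real.toNNReal (gaussianPDFReal 0 1 z)) • Real.exp (s * z + m)
      = Real.exp (m + s ^ 2 / 2) * stdGaussianPDF (z - s) := by
    intro z
    rw [NNReal.smul_def, smul_eq_mul, Real.coe_toNNReal _ (gaussianPDFReal_nonneg _ _ _)]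
    rw [pdf01_eq']
    simp only [stdGaussianPDF]
    rw [mul_comm ((Real.sqrt (2 * Real.pi))⁻¹) (Real.exp (-z^2/2)), mul_assoc, mul_comm _ (Real.exp (s*z+m)),
      ← mul_assoc, ← Real.exp_add, mul_comm (Real.exp (m + s^2/2)), mul_assoc,
      mul_comm ((Real.sqrt (2 * Real.pi))⁻¹), ← Real.exp_add]
    congr 1
    ring_nf
  simp_rw [hpt]
  rw [integral_const_mul, transl']
  ring_nf

/-- If `G` is Gaussian with mean `m`, variance `s²`, independent of `V`, and `P(V < D) > 0`,
then `E[(1 - c e^G)₊ | V < D] = Φ(w/s) - c e^{m + s²/2} Φ(w/s - s)` with `w = -log c - m`. -/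
theorem condExp_LGD_financial_asset {Ω : Type*} [MeasurableSpace Ω]
    (P : Measure Ω) [IsProbabilityMeasure P]
    (G V : Ω → ℝ) (hGmeas : Measurable G) (hVmeas : Measurable V)
    (m s : ℝ) (hs : 0 < s)
    (hlaw : P.map G = gaussianReal m ⟨s ^ 2, sq_nonneg s⟩)
    (hindep : IndepFun G V P)
    (D : ℝ) (hD : 0 < (P {ω | V ω < D}).toReal)
    (c : ℝ) (hc : 0 < c) :
    (∫ ω in {ω | V ω < D}, max (1 - c * Real.exp (G ω)) 0 ∂P)
        / (P {ω | V ω < D}).toReal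
      = stdGaussianCDF ((-Real.log c - m) / s)
        - c * Real.exp (m + s ^ 2 / 2)
          * stdGaussianCDF ((-Real.log c - m) / s - s) := by
  have hFcont : Continuous (fun x : ℝ => max (1 - c * Real.exp x) 0) := by fun_prop
  set A : Set Ω := {ω | V ω < D} with hA
  have hAmeas : MeasurableSet A := hVmeas measurableSet_Iio
  -- Step A: independence factorization
  have hXY : IndepFun (fun ω => max (1 - c * Real.exp (G ω)) 0)
      (fun ω => Set.indicator (Set.Iio D) (fun _ => (1:ℝ)) (V ω)) P :=
    hindep.comp hFcont.measurable (measurable_const.indicator measurableSet_Iio)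
  have hprod : (∫ ω in A, max (1 - c * Real.exp (G ω)) 0 ∂P)
      = (∫ ω, max (1 - c * Real.exp (G ω)) 0 ∂P) * (P A).toReal := by
    have h1 : (∫ ω in A, max (1 - c * Real.exp (G ω)) 0 ∂P)
        = ∫ ω, (fun ω => max (1 - c * Real.exp (G ω)) 0) ω
            * (fun ω => Set.indicator (Set.Iio D) (fun _ => (1:ℝ)) (V ω)) ω ∂P := by
      rw [← integral_indicator hAmeas]
      congr 1
      funext ω
      by_cases h : V ω < D
      · simp [Set.indicator_of_mem, h, hA, Set.mem_Iio.mpr h,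
          Set.indicator_of_mem (show ω ∈ A from h)]
      · simp [hA, Set.indicator_of_notMem, h,
          Set.indicator_of_notMem (show ω ∉ A from h)]
    rw [h1, hXY.integral_fun_mul_eq_mul_integral
      ((hFcont.measurable.comp hGmeas).aestronglyMeasurable)
      (((measurable_const.indicator measurableSet_Iio).comp hVmeas).aestronglyMeasurable)]
    congr 1
    have : (fun ω => Set.indicator (Set.Iio D) (fun _ => (1:ℝ)) (V ω))
        = Set.indicator A (fun _ => (1:ℝ)) := by
      funext ω
      by_cases h : V ω < D
      · simp [Set.indicator_of_mem, Set.mem_Iio.mpr h, Set.indicator_of_mem (show ω ∈ A from h)]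
      · simp [Set.indicator_of_notMem, h, Set.indicator_of_notMem (show ω ∉ A from h)]
    rw [this, show (fun _ : Ω => (1:ℝ)) = 1 from rfl, integral_indicator_one hAmeas]
    rfl
  rw [hprod, mul_div_assoc, div_self hD.ne', mul_one]
  -- Step B: change of law
  have hB : (∫ ω, max (1 - c * Real.exp (G ω)) 0 ∂P)
      = ∫ x, max (1 - c * Real.exp x) 0 ∂(gaussianReal m ⟨s ^ 2, sq_nonneg s⟩) := by
    rw [← hlaw, integral_map hGmeas.aemeasurable hFcont.aestronglyMeasurable]
  rw [hB, gauss_integral m s c hs hc]
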